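/- Let H be a complex Hilbert space of finite dimension N, let U = (u_k) and V = (v_ℓ) be two orthonormal bases of H (each being its own dual frame), and let r ∈ (1,2]. If some x ∈ H, x ≠ 0, achieves equality ‖a‖₀ · ‖b‖₀ = 1/(μ_r(U,V) · μ_r(V,U)) for its analysis coefficients a = (⟨x,u_k⟩)_k and b = (⟨x,v_ℓ⟩)_ℓ, then ‖a‖₀ = ‖b‖₀ = 1; consequently there exist indices k₀, ℓ₀ and a unimodular scalar c with v_{ℓ₀} = c·u_{k₀}, and x is a scalar multiple of u_{k₀}. -/

import Mathlib

open scoped InnerProductSpace ENNReal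

noncomputable section

variable {H : Type*} [NormedAddCommGroup H] [InnerProductSpace ℂ H] {Λ : Type*}

/-- `u` is a frame for `H` with frame bounds `0 < A ≤ B`. -/
def IsFrameWith (u : Λ → H) (A B : ℝ) : Prop :=
  0 < A ∧ A ≤ B ∧ ∀ x : H,
    A * ‖x‖ ^ 2 ≤ ∑' k, ‖⟪x, u k⟫_ℂ‖ ^ 2 ∧ ∑' k, ‖⟪x, u k⟫_ℂ‖ ^ 2 ≤ B * ‖x‖ ^ 2

/-- `u` is a frame for `H`. -/
def IsFrame (u : Λ → H) : Prop := ∃ A B, IsFrameWith u A B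

/-- `u` is a tight frame for `H` with frame constant `A`. -/
def IsTightFrame (u : Λ → H) (A : ℝ) : Prop :=
  0 < A ∧ ∀ x : H, ∑' k, ‖⟪x, u k⟫_ℂ‖ ^ 2 = A * ‖x‖ ^ 2

/-- `ut` is a dual frame of the frame `u`: it is a frame and `x = Σ_k ⟨x,u_k⟩ ũ_k` for all `x`. -/
def IsDualFrame (u ut : Λ → H) : Prop :=
  IsFrame ut ∧ ∀ x : H, HasSum (fun k => ⟪x, u k⟫_ℂ • ut k) x

/-- Mutual coherence of order `r ∈ [1,2]` (`ℝ≥0∞`-valued, for countable index sets).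
For `r ≠ 1` the conjugate exponent is `r' = r/(r-1)`, and `r/r' = r - 1`, so
`μ_r = sup_ℓ (Σ_k |⟨ũ_k,v_ℓ⟩|^{r'})^{r/r'}`; for `r = 1` it is `sup_{k,ℓ} |⟨ũ_k,v_ℓ⟩|`. -/
def mu (r : ℝ) (ut v : Λ → H) : ℝ≥0∞ :=
  if r = 1 then ⨆ ℓ, ⨆ k, (‖⟪ut k, v ℓ⟫_ℂ‖₊ : ℝ≥0∞)
  else ⨆ ℓ, (∑' k, (‖⟪ut k, v ℓ⟫_ℂ‖₊ : ℝ≥0∞) ^ (r / (r - 1))) ^ (r - 1)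

/-- Generalized coherence `μ⋆(U,Ũ,V,Ṽ) = inf_{r ∈ [1,2]} √(μ_r(Ũ,V)·μ_r(Ṽ,U))`. -/
def mustar (u ut v vt : Λ → H) : ℝ≥0∞ :=
  ⨅ r : Set.Icc (1 : ℝ) 2, (mu (r : ℝ) ut v * mu (r : ℝ) vt u) ^ ((1 : ℝ) / 2)

/-- `‖a‖₀ ∈ ℕ ∪ {∞}`: the number of nonzero entries of the sequence `a`. -/
def l0 (a : Λ → ℂ) : ℕ∞ := (Function.support a).encard

/-- Mutual coherence of order `r ∈ [1,2]` (real-valued, finite index sets). -/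
def muF [Fintype Λ] (r : ℝ) (ut v : Λ → H) : ℝ :=
  if r = 1 then ⨆ ℓ, ⨆ k, ‖⟪ut k, v ℓ⟫_ℂ‖
  else ⨆ ℓ, (∑ k, ‖⟪ut k, v ℓ⟫_ℂ‖ ^ (r / (r - 1))) ^ (r - 1)

/-- Generalized coherence (real-valued, finite index sets). -/
def mustarF [Fintype Λ] (u ut v vt : Λ → H) : ℝ :=
  ⨅ r : Set.Icc (1 : ℝ) 2, Real.sqrt (muF (r : ℝ) ut v * muF (r : ℝ) vt u)

/-- Rényi entropy of order `α` of the (nonzero) sequence `a`, computed on the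
normalization `ã = a/‖a‖₂`: `R_α(a) = (1-α)⁻¹ ln Σ_k |ã_k|^{2α}`. -/
def renyi [Fintype Λ] (α : ℝ) (a : Λ → ℂ) : ℝ :=
  (1 - α)⁻¹ * Real.log (∑ k, (‖a k‖ ^ 2 / ∑ j, ‖a j‖ ^ 2) ^ α)

/-- Shannon entropy of the (nonzero) sequence `a`, computed on `ã = a/‖a‖₂`,
with the convention `0·ln 0 = 0`. -/
def shannon [Fintype Λ] (a : Λ → ℂ) : ℝ :=
  -∑ k, (‖a k‖ ^ 2 / ∑ j, ‖a j‖ ^ 2) * Real.log (‖a k‖ ^ 2 / ∑ j, ‖a j‖ ^ 2)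

section Aux

variable [Fintype Λ]

lemma parseval' (b : OrthonormalBasis Λ ℂ H) (x : H) :
    ∑ k, ‖⟪x, b k⟫_ℂ‖^2 = ‖x‖^2 := by
  have h := b.sum_inner_mul_inner x x
  rw [inner_self_eq_norm_sq_to_K] at h
  have h2 : ∀ k, ⟪x, b k⟫_ℂ * ⟪b k, x⟫_ℂ = ((‖⟪x, b k⟫_ℂ‖^2 : ℝ) : ℂ) := by
    intro k
    rw [← inner_conj_symm x (b k), RCLike.conj_mul, RCLike.norm_conj]
    norm_cast
  rw [Finset.sum_congr rfl (fun k _ => h2 k)] at h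
  push_cast at h
  have h3 := congrArg Complex.re h
  simpa [← Complex.ofReal_pow] using h3

lemma muF_nonneg (r : ℝ) (ut v : Λ → H) : 0 ≤ muF r ut v := by
  unfold muF
  split
  · exact Real.iSup_nonneg fun ℓ => Real.iSup_nonneg fun k => norm_nonneg _
  · exact Real.iSup_nonneg fun ℓ => Real.rpow_nonneg
      (Finset.sum_nonneg fun k _ => Real.rpow_nonneg (norm_nonneg _) _) _

set_option maxHeartbeats 2000000 in
lemma keyLemma [Nonempty Λ] (U V : OrthonormalBasis Λ ℂ H) {r : ℝ} (hr1 : 1 < r) (hr2 : r ≤ 2)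
    (x : H) (hx : x ≠ 0) :
    1 ≤ (((Finset.univ.filter fun ℓ => ⟪x, V ℓ⟫_ℂ ≠ 0)).card : ℝ) ^ (r/2) *
        (((Finset.univ.filter fun k => ⟪x, U k⟫_ℂ ≠ 0)).card : ℝ) ^ (1 - r/2) *
        muF r (⇑U) (⇑V) ∧
    ((((Finset.univ.filter fun ℓ => ⟪x, V ℓ⟫_ℂ ≠ 0)).card : ℝ) ^ (r/2) *
        (((Finset.univ.filter fun k => ⟪x, U k⟫_ℂ ≠ 0)).card : ℝ) ^ (1 - r/2) *
        muF r (⇑U) (⇑V) ≤ 1 →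
      ((Finset.univ.filter fun ℓ => ⟪x, V ℓ⟫_ℂ ≠ 0)).card = 1) := by
  classical
  have hr0 : (0:ℝ) < r := by linarith
  have hrne : r ≠ 0 := ne_of_gt hr0
  have hr1' : (0:ℝ) < r - 1 := by linarith
  set q : ℝ := r / (r - 1) with hqdef
  have hcj : r.HolderConjugate q := Real.HolderConjugate.conjExponent hr1
  have hqpos : (0:ℝ) < q := hcj.symm.pos
  set Sa := (Finset.univ.filter fun k => ⟪x, U k⟫_ℂ ≠ 0) with hSadef
  set Sb := (Finset.univ.filter fun ℓ => ⟪x, V ℓ⟫_ℂ ≠ 0) with hSbdef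
  set μ := muF r (⇑U) (⇑V) with hμdef
  set A : ℝ := (Sa.card : ℝ) with hAdef
  set B : ℝ := (Sb.card : ℝ) with hBdef
  set E : ℝ := ‖x‖^2 with hEdef
  have hE : 0 < E := by
    have h0 : ‖x‖ ≠ 0 := norm_ne_zero_iff.mpr hx
    rw [hEdef]; positivity
  have hPb : ∑ ℓ, ‖⟪x, V ℓ⟫_ℂ‖^2 = E := parseval' V x
  have hPa : ∑ k, ‖⟪x, U k⟫_ℂ‖^2 = E := parseval' U x
  have hPG : ∀ ℓ, ∑ k, ‖⟪U k, V ℓ⟫_ℂ‖^2 = 1 := by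
    intro ℓ
    have h1 := parseval' U (V ℓ)
    have h2 : ∀ k, ‖⟪V ℓ, U k⟫_ℂ‖ = ‖⟪U k, V ℓ⟫_ℂ‖ := fun k => norm_inner_symm _ _
    rw [Finset.sum_congr rfl (fun k _ => by rw [h2 k])] at h1
    rw [h1, V.orthonormal.1 ℓ, one_pow]
  -- nonemptiness
  have hSane : Sa.Nonempty := by
    rw [Finset.filter_nonempty_iff]
    by_contra hc
    push_neg at hc
    have : E = 0 := by
      rw [← hPa]
      apply Finset.sum_eq_zero
      intro k _
      rw [hc k (Finset.mem_univ k)]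
      simp
    linarith
  have hSbne : Sb.Nonempty := by
    rw [Finset.filter_nonempty_iff]
    by_contra hc
    push_neg at hc
    have : E = 0 := by
      rw [← hPb]
      apply Finset.sum_eq_zero
      intro ℓ _
      rw [hc ℓ (Finset.mem_univ ℓ)]
      simp
    linarith
  have hApos : (0:ℝ) < A := by
    rw [hAdef]; exact_mod_cast Finset.card_pos.mpr hSane
  have hBpos : (0:ℝ) < B := by
    rw [hBdef]; exact_mod_cast Finset.card_pos.mpr hSbne
  have hAoff : ∀ k, k ∉ Sa → ⟪x, U k⟫_ℂ = 0 := by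
    intro k hk
    by_contra hne
    exact hk (by simp [hSadef, hne])
  have hBoff : ∀ ℓ, ℓ ∉ Sb → ⟪x, V ℓ⟫_ℂ = 0 := by
    intro ℓ hℓ
    by_contra hne
    exact hℓ (by simp [hSbdef, hne])
  -- maximizer
  obtain ⟨ℓs, -, hmax⟩ := Finset.exists_max_image Finset.univ (fun ℓ => ‖⟪x, V ℓ⟫_ℂ‖)
    Finset.univ_nonempty
  set M : ℝ := ‖⟪x, V ℓs⟫_ℂ‖ with hMdef
  have hM0 : 0 ≤ M := norm_nonneg _
  -- step 1 : E ≤ B * M^2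
  have h1 : E ≤ B * M^2 := by
    calc E = ∑ ℓ, ‖⟪x, V ℓ⟫_ℂ‖^2 := hPb.symm
    _ = ∑ ℓ ∈ Sb, ‖⟪x, V ℓ⟫_ℂ‖^2 := by
        symm
        apply Finset.sum_subset (Finset.subset_univ _)
        intro ℓ _ hℓ
        rw [hBoff ℓ hℓ]; simp
    _ ≤ ∑ ℓ ∈ Sb, M^2 := Finset.sum_le_sum (fun ℓ _ =>
        pow_le_pow_left₀ (norm_nonneg _) (hmax ℓ (Finset.mem_univ ℓ)) 2)
    _ = B * M^2 := by rw [Finset.sum_const, nsmul_eq_mul]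
  set X : ℝ := ∑ k ∈ Sa, ‖⟪x, U k⟫_ℂ‖ ^ r with hXdef
  set t : ℝ := ∑ k ∈ Sa, ‖⟪U k, V ℓs⟫_ℂ‖ ^ q with htdef
  have hXnn : 0 ≤ X := Finset.sum_nonneg fun k _ => Real.rpow_nonneg (norm_nonneg _) _
  have htnn : 0 ≤ t := Finset.sum_nonneg fun k _ => Real.rpow_nonneg (norm_nonneg _) _
  -- step 2 : Hölder
  have h2 : M ≤ X ^ (1/r) * t ^ (1/q) := by
    have hbexp : ⟪x, V ℓs⟫_ℂ = ∑ k ∈ Sa, ⟪x, U k⟫_ℂ * ⟪U k, V ℓs⟫_ℂ := by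
      rw [← U.sum_inner_mul_inner x (V ℓs)]
      symm
      apply Finset.sum_subset (Finset.subset_univ _)
      intro k _ hk
      rw [hAoff k hk]; simp
    calc M = ‖∑ k ∈ Sa, ⟪x, U k⟫_ℂ * ⟪U k, V ℓs⟫_ℂ‖ := by rw [hMdef, hbexp]
    _ ≤ ∑ k ∈ Sa, ‖⟪x, U k⟫_ℂ * ⟪U k, V ℓs⟫_ℂ‖ := norm_sum_le _ _
    _ = ∑ k ∈ Sa, ‖⟪x, U k⟫_ℂ‖ * ‖⟪U k, V ℓs⟫_ℂ‖ := by simp [norm_mul]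
    _ ≤ X ^ (1/r) * t ^ (1/q) :=
        Real.inner_le_Lp_mul_Lq_of_nonneg Sa hcj (fun k _ => norm_nonneg _)
          (fun k _ => norm_nonneg _)
  -- step 3 : X ≤ A^(1-r/2) * E^(r/2)
  have h3 : X ≤ A ^ (1 - r/2) * E ^ (r/2) := by
    have hAne : A ≠ 0 := ne_of_gt hApos
    have hw : ∑ _k ∈ Sa, (A⁻¹ : ℝ) = 1 := by
      rw [Finset.sum_const, nsmul_eq_mul, hAdef]
      field_simp
    have hp21 : (1:ℝ) ≤ 2 / r := by rw [le_div_iff₀ hr0]; linarith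
    have happ := Real.arith_mean_le_rpow_mean Sa (fun _ => (A⁻¹ : ℝ))
      (fun k => ‖⟪x, U k⟫_ℂ‖ ^ r) (fun i _ => by positivity) hw
      (fun i _ => Real.rpow_nonneg (norm_nonneg _) _) hp21
    have hz : ∀ k : Λ, ((‖⟪x, U k⟫_ℂ‖ ^ r) ^ (2/r : ℝ)) = ‖⟪x, U k⟫_ℂ‖^2 := by
      intro k
      rw [← Real.rpow_natCast ‖⟪x, U k⟫_ℂ‖ 2, ← Real.rpow_mul (norm_nonneg _)]
      congr 1
      push_cast
      field_simp
    simp only [hz] at happ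
    rw [← Finset.mul_sum, ← Finset.mul_sum] at happ
    have hsum2 : ∑ k ∈ Sa, ‖⟪x, U k⟫_ℂ‖^2 = E := by
      rw [← hPa]
      apply Finset.sum_subset (Finset.subset_univ _)
      intro k _ hk
      rw [hAoff k hk]; simp
    rw [hsum2] at happ
    have hinv : (1:ℝ) / (2/r) = r/2 := by field_simp
    rw [hinv] at happ
    -- happ : A⁻¹ * X ≤ (A⁻¹ * E) ^ (r/2)
    have hAne : (A:ℝ) ≠ 0 := ne_of_gt hApos
    have hXle : X ≤ A * (A⁻¹ * E) ^ (r/2) := by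
      have h5 := mul_le_mul_of_nonneg_left happ hApos.le
      calc X = A * (A⁻¹ * X) := by field_simp
      _ ≤ A * (A⁻¹ * E) ^ (r/2) := h5
    have hval : A * (A⁻¹ * E) ^ (r/2) = A ^ (1 - r/2) * E ^ (r/2) := by
      rw [Real.mul_rpow (by positivity) hE.le, Real.inv_rpow hApos.le,
        Real.rpow_sub hApos, Real.rpow_one]
      field_simp
    rw [hval] at hXle
    exact hXle
  -- combined chain with t
  have hrpow_sq : ∀ u : ℝ, 0 ≤ u → u ^ 2 = (u ^ (2:ℝ)) := by
    intro u hu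
    rw [← Real.rpow_natCast u 2]
    norm_num
  -- M^r ≤ X * t^(r-1)
  have hMr : M ^ (r:ℝ) ≤ X * t ^ (r - 1) := by
    calc M ^ (r:ℝ) ≤ (X ^ (1/r) * t ^ (1/q)) ^ (r:ℝ) :=
          Real.rpow_le_rpow hM0 h2 hr0.le
    _ = (X ^ (1/r)) ^ (r:ℝ) * (t ^ (1/q)) ^ (r:ℝ) :=
          Real.mul_rpow (Real.rpow_nonneg hXnn _) (Real.rpow_nonneg htnn _)
    _ = X * t ^ (r - 1) := by
          rw [← Real.rpow_mul hXnn, ← Real.rpow_mul htnn]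
          rw [one_div_mul_cancel hrne]
          rw [Real.rpow_one]
          congr 1
          rw [hqdef]
          field_simp
  -- E^(r/2) ≤ B^(r/2) * M^r
  have hEr : E ^ (r/2 : ℝ) ≤ B ^ (r/2 : ℝ) * M ^ (r : ℝ) := by
    calc E ^ (r/2 : ℝ) ≤ (B * M^2) ^ (r/2 : ℝ) := Real.rpow_le_rpow hE.le h1 (by positivity)
    _ = B ^ (r/2:ℝ) * (M^2) ^ (r/2:ℝ) := Real.mul_rpow hBpos.le (by positivity)
    _ = B ^ (r/2:ℝ) * M ^ (r:ℝ) := by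
        rw [hrpow_sq M hM0, ← Real.rpow_mul hM0,
          show (2:ℝ) * (r/2) = r by ring]
  -- the chain with t
  have hchain : 1 ≤ B ^ (r/2:ℝ) * A ^ (1 - r/2 : ℝ) * t ^ (r-1 : ℝ) := by
    have c1 : E ^ (r/2:ℝ) ≤ B ^ (r/2:ℝ) * (X * t ^ (r-1:ℝ)) :=
      hEr.trans (mul_le_mul_of_nonneg_left hMr (Real.rpow_nonneg hBpos.le _))
    have c2 : B ^ (r/2:ℝ) * (X * t ^ (r-1:ℝ)) ≤
        B ^ (r/2:ℝ) * ((A ^ (1 - r/2:ℝ) * E ^ (r/2:ℝ)) * t ^ (r-1:ℝ)) := by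
      apply mul_le_mul_of_nonneg_left _ (Real.rpow_nonneg hBpos.le _)
      exact mul_le_mul_of_nonneg_right h3 (Real.rpow_nonneg htnn _)
    have c3 : E ^ (r/2:ℝ) ≤ (B ^ (r/2:ℝ) * A ^ (1 - r/2:ℝ) * t ^ (r-1:ℝ)) * E ^ (r/2:ℝ) := by
      calc E ^ (r/2:ℝ) ≤ B ^ (r/2:ℝ) * ((A ^ (1 - r/2:ℝ) * E ^ (r/2:ℝ)) * t ^ (r-1:ℝ)) :=
            c1.trans c2
      _ = (B ^ (r/2:ℝ) * A ^ (1 - r/2:ℝ) * t ^ (r-1:ℝ)) * E ^ (r/2:ℝ) := by ring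
    have hEpos : (0:ℝ) < E ^ (r/2:ℝ) := Real.rpow_pos_of_pos hE _
    nlinarith [c3, hEpos]
  -- t^(r-1) ≤ μ
  have hg : t ≤ ∑ k, ‖⟪U k, V ℓs⟫_ℂ‖ ^ q :=
    Finset.sum_le_sum_of_subset_of_nonneg (Finset.subset_univ _)
      (fun k _ _ => Real.rpow_nonneg (norm_nonneg _) _)
  have hμform : μ = ⨆ ℓ, (∑ k, ‖⟪U k, V ℓ⟫_ℂ‖ ^ q) ^ (r-1 : ℝ) := by
    rw [hμdef, muF, if_neg (by linarith : r ≠ 1), hqdef]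
  have hbdd : BddAbove (Set.range fun ℓ => (∑ k, ‖⟪U k, V ℓ⟫_ℂ‖ ^ q) ^ (r-1 : ℝ)) :=
    (Set.finite_range _).bddAbove
  have hgμ : (∑ k, ‖⟪U k, V ℓs⟫_ℂ‖ ^ q) ^ (r-1:ℝ) ≤ μ := by
    rw [hμform]
    exact le_ciSup hbdd ℓs
  have htμ : t ^ (r-1:ℝ) ≤ μ :=
    (Real.rpow_le_rpow htnn hg hr1'.le).trans hgμ
  have hμnn : 0 ≤ μ := le_trans (Real.rpow_nonneg htnn _) htμ
  -- part 1
  have part1 : 1 ≤ B ^ (r/2:ℝ) * A ^ (1 - r/2:ℝ) * μ := by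
    calc (1:ℝ) ≤ B ^ (r/2:ℝ) * A ^ (1 - r/2:ℝ) * t ^ (r-1:ℝ) := hchain
    _ ≤ B ^ (r/2:ℝ) * A ^ (1 - r/2:ℝ) * μ := by
        apply mul_le_mul_of_nonneg_left htμ
        positivity
  refine ⟨part1, ?_⟩
  -- part 2
  intro hle
  have hBcard1 : 1 ≤ Sb.card := Finset.card_pos.mpr hSbne
  rcases eq_or_lt_of_le hr2 with hr2e | hr2s
  · -- r = 2
    have hμ1 : μ = 1 := by
      rw [hμform]
      have h6 : ∀ ℓ : Λ, (∑ k, ‖⟪U k, V ℓ⟫_ℂ‖ ^ q) ^ (r-1:ℝ) = 1 := by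
        intro ℓ
        have hq2 : q = 2 := by rw [hqdef, hr2e]; norm_num
        have h7 : ∑ k, ‖⟪U k, V ℓ⟫_ℂ‖ ^ q = 1 := by
          rw [hq2, ← hPG ℓ]
          apply Finset.sum_congr rfl
          intro k _
          rw [← hrpow_sq _ (norm_nonneg _)]
        rw [h7, Real.one_rpow]
      simp only [h6]
      exact ciSup_const
    rw [hμ1, mul_one, show 1 - r/2 = 0 by rw [hr2e]; norm_num,
      show r/2 = 1 by rw [hr2e]; norm_num, Real.rpow_one, Real.rpow_zero, mul_one] at hle
    have h8 : Sb.card ≤ 1 := by rw [hBdef] at hle; exact_mod_cast hle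
    omega
  · -- r < 2
    have hKpos : (0:ℝ) < B ^ (r/2:ℝ) * A ^ (1 - r/2:ℝ) :=
      mul_pos (Real.rpow_pos_of_pos hBpos _) (Real.rpow_pos_of_pos hApos _)
    have hinj : ∀ u v : ℝ, 0 ≤ u → 0 ≤ v → u ^ (r-1:ℝ) = v ^ (r-1:ℝ) → u = v := by
      intro u v hu hv huv
      have : (u ^ (r-1:ℝ)) ^ ((r-1:ℝ)⁻¹) = (v ^ (r-1:ℝ)) ^ ((r-1:ℝ)⁻¹) := by rw [huv]
      rwa [← Real.rpow_mul hu, ← Real.rpow_mul hv,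
        mul_inv_cancel₀ (ne_of_gt hr1'), Real.rpow_one, Real.rpow_one] at this
    -- equality : μ = t^(r-1)
    have hμt : μ = t ^ (r-1:ℝ) := by
      have hle2 : B ^ (r/2:ℝ) * A ^ (1 - r/2:ℝ) * μ ≤
          B ^ (r/2:ℝ) * A ^ (1 - r/2:ℝ) * t ^ (r-1:ℝ) := hle.trans hchain
      rw [mul_assoc, mul_assoc] at hle2
      have h9 := le_of_mul_le_mul_left (le_of_mul_le_mul_left hle2
        (Real.rpow_pos_of_pos hBpos _)) (Real.rpow_pos_of_pos hApos _)
      exact le_antisymm h9 htμ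
    -- off-support columns vanish
    have hgt : t = ∑ k, ‖⟪U k, V ℓs⟫_ℂ‖ ^ q := by
      apply hinj t _ htnn (Finset.sum_nonneg fun k _ => Real.rpow_nonneg (norm_nonneg _) _)
      exact le_antisymm (Real.rpow_le_rpow htnn hg hr1'.le) (hμt ▸ hgμ)
    have hoff : ∀ k, k ∉ Sa → ‖⟪U k, V ℓs⟫_ℂ‖ = 0 := by
      intro k hk
      have hsplit := Finset.sum_sdiff (Finset.subset_univ Sa)
        (f := fun k => ‖⟪U k, V ℓs⟫_ℂ‖ ^ q)
      have hzero : ∑ k ∈ Finset.univ \ Sa, ‖⟪U k, V ℓs⟫_ℂ‖ ^ q = 0 := by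
        rw [← htdef] at hsplit
        linarith [hgt, hsplit]
      have hmem : k ∈ Finset.univ \ Sa := Finset.mem_sdiff.mpr ⟨Finset.mem_univ k, hk⟩
      have := (Finset.sum_eq_zero_iff_of_nonneg
        (fun i _ => Real.rpow_nonneg (norm_nonneg _) _)).mp hzero k hmem
      have hq0 : (‖⟪U k, V ℓs⟫_ℂ‖ : ℝ) ^ (q:ℝ) = 0 := this
      rcases (Real.rpow_eq_zero_iff_of_nonneg (norm_nonneg _)).mp hq0 with ⟨h0, -⟩
      exact h0
    have hsum1 : ∑ k ∈ Sa, ‖⟪U k, V ℓs⟫_ℂ‖ ^ 2 = 1 := by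
      rw [← hPG ℓs]
      apply Finset.sum_subset (Finset.subset_univ _)
      intro k _ hk
      rw [hoff k hk]
      norm_num
    -- Cauchy-Schwarz : s1 ≤ A^(1/2)
    set s1 : ℝ := ∑ k ∈ Sa, ‖⟪U k, V ℓs⟫_ℂ‖ with hs1def
    have hs1nn : 0 ≤ s1 := Finset.sum_nonneg fun k _ => norm_nonneg _
    have hcs : s1 ≤ A ^ ((1:ℝ)/2) := by
      have hconj22 : (2:ℝ).HolderConjugate 2 := Real.holderConjugate_iff.mpr ⟨one_lt_two, by norm_num⟩
      have h10 := Real.inner_le_Lp_mul_Lq_of_nonneg Sa hconj22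
        (fun k (_ : k ∈ Sa) => norm_nonneg (⟪U k, V ℓs⟫_ℂ)) (fun k _ => zero_le_one)
      rw [show ∑ k ∈ Sa, ‖⟪U k, V ℓs⟫_ℂ‖ * (1:ℝ) = s1 by
        rw [hs1def]; exact Finset.sum_congr rfl fun k _ => mul_one _] at h10
      have e1 : ∑ k ∈ Sa, ‖⟪U k, V ℓs⟫_ℂ‖ ^ (2:ℝ) = 1 := by
        rw [← hsum1]
        exact Finset.sum_congr rfl fun k _ => (hrpow_sq _ (norm_nonneg _)).symm
      have e2 : ∑ k ∈ Sa, (1:ℝ) ^ (2:ℝ) = A := by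
        simp [Real.one_rpow, hAdef]
      rw [e1, e2, Real.one_rpow, one_mul] at h10
      exact h10
    -- interpolation
    have hconj2 : (1/(2-r) : ℝ).HolderConjugate (1/(r-1)) := by
      refine Real.holderConjugate_iff.mpr ⟨?_, ?_⟩
      · rw [one_lt_div (by linarith : (0:ℝ) < 2 - r)]
        linarith
      · rw [one_div, inv_inv, one_div, inv_inv]
        ring
    have h11 := Real.inner_le_Lp_mul_Lq_of_nonneg Sa hconj2
      (f := fun k => ‖⟪U k, V ℓs⟫_ℂ‖ ^ (2-r:ℝ)) (g := fun k => ‖⟪U k, V ℓs⟫_ℂ‖ ^ (r:ℝ))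
      (fun k _ => Real.rpow_nonneg (norm_nonneg _) _)
      (fun k _ => Real.rpow_nonneg (norm_nonneg _) _)
    have e3 : ∑ k ∈ Sa, ‖⟪U k, V ℓs⟫_ℂ‖ ^ (2-r:ℝ) * ‖⟪U k, V ℓs⟫_ℂ‖ ^ (r:ℝ) = 1 := by
      rw [← hsum1]
      apply Finset.sum_congr rfl
      intro k _
      rw [← Real.rpow_add' (norm_nonneg _) (by intro hcon; linarith : (2-r)+r ≠ 0),
        show (2-r)+r = (2:ℝ) by ring, ← hrpow_sq _ (norm_nonneg _)]
    have e4 : ∀ k : Λ, (‖⟪U k, V ℓs⟫_ℂ‖ ^ (2-r:ℝ)) ^ ((1:ℝ)/(2-r)) = ‖⟪U k, V ℓs⟫_ℂ‖ := by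
      intro k
      rw [← Real.rpow_mul (norm_nonneg _), mul_one_div_cancel (by linarith : (2:ℝ)-r ≠ 0),
        Real.rpow_one]
    have e5 : ∀ k : Λ, (‖⟪U k, V ℓs⟫_ℂ‖ ^ (r:ℝ)) ^ ((1:ℝ)/(r-1)) = ‖⟪U k, V ℓs⟫_ℂ‖ ^ (q:ℝ) := by
      intro k
      rw [← Real.rpow_mul (norm_nonneg _), hqdef]
      congr 1
      field_simp
    rw [e3] at h11
    simp only [e4, e5] at h11
    rw [one_div_one_div, one_div_one_div, ← hs1def, ← htdef] at h11
    -- h11 : 1 ≤ s1 ^ (2-r) * t ^ (r-1)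
    have hfinal : (1:ℝ) ≤ A ^ (1 - r/2 : ℝ) * μ := by
      have h13 : s1 ^ (2-r:ℝ) ≤ (A ^ ((1:ℝ)/2)) ^ (2-r:ℝ) :=
        Real.rpow_le_rpow hs1nn hcs (by linarith)
      have h14 : (A ^ ((1:ℝ)/2)) ^ (2-r:ℝ) = A ^ (1 - r/2 : ℝ) := by
        rw [← Real.rpow_mul hApos.le, show (1:ℝ)/2 * (2-r) = 1 - r/2 by ring]
      calc (1:ℝ) ≤ s1 ^ (2-r:ℝ) * t ^ (r-1:ℝ) := h11
      _ ≤ (A ^ ((1:ℝ)/2)) ^ (2-r:ℝ) * t ^ (r-1:ℝ) :=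
          mul_le_mul_of_nonneg_right h13 (Real.rpow_nonneg htnn _)
      _ = A ^ (1 - r/2:ℝ) * μ := by rw [h14, hμt]
    have h12 : B ^ (r/2:ℝ) ≤ 1 := by
      calc B ^ (r/2:ℝ) = B ^ (r/2:ℝ) * 1 := (mul_one _).symm
      _ ≤ B ^ (r/2:ℝ) * (A ^ (1-r/2:ℝ) * μ) :=
          mul_le_mul_of_nonneg_left hfinal (Real.rpow_nonneg hBpos.le _)
      _ = B ^ (r/2:ℝ) * A ^ (1-r/2:ℝ) * μ := (mul_assoc _ _ _).symm
      _ ≤ 1 := hle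
    have hB1 : B ≤ 1 := by
      by_contra hcon
      push_neg at hcon
      have : (1:ℝ) < B ^ (r/2:ℝ) :=
        Real.one_lt_rpow_iff_of_pos hBpos |>.mpr (Or.inl ⟨hcon, by linarith⟩)
      linarith
    have h8 : Sb.card ≤ 1 := by rw [hBdef] at hB1; exact_mod_cast hB1
    omega

end Aux

set_option maxHeartbeats 2000000 in
/-- for two orthonormal bases and `r ∈ (1,2]`, equality in the refined
Elad–Bruckstein inequality forces `‖a‖₀ = ‖b‖₀ = 1`, the two bases share a common element
(up to a unimodular factor), and `x` is a multiple of it. -/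
theorem stmt7 {H : Type*} [NormedAddCommGroup H] [InnerProductSpace ℂ H]
    [FiniteDimensional ℂ H] {Λ : Type*} [Fintype Λ] [Nonempty Λ]
    (U V : OrthonormalBasis Λ ℂ H)
    (r : ℝ) (hr : r ∈ Set.Ioc (1 : ℝ) 2) (x : H) (hx : x ≠ 0)
    (heq : (((Function.support fun k => ⟪x, U k⟫_ℂ).ncard *
              (Function.support fun ℓ => ⟪x, V ℓ⟫_ℂ).ncard : ℕ) : ℝ) =
            1 / (muF r (⇑U) (⇑V) * muF r (⇑V) (⇑U))) :
    (Function.support fun k => ⟪x, U k⟫_ℂ).ncard = 1 ∧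
    (Function.support fun ℓ => ⟪x, V ℓ⟫_ℂ).ncard = 1 ∧
    ∃ (k₀ ℓ₀ : Λ) (c : ℂ), ‖c‖ = 1 ∧ V ℓ₀ = c • U k₀ ∧ ∃ t : ℂ, x = t • U k₀ := by
  classical
  obtain ⟨hr1, hr2⟩ := hr
  have hsuppU : (Function.support fun k => ⟪x, U k⟫_ℂ) =
      ↑(Finset.univ.filter fun k => ⟪x, U k⟫_ℂ ≠ 0) := by
    ext k; simp [Function.mem_support]
  have hsuppV : (Function.support fun ℓ => ⟪x, V ℓ⟫_ℂ) =
      ↑(Finset.univ.filter fun ℓ => ⟪x, V ℓ⟫_ℂ ≠ 0) := by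
    ext ℓ; simp [Function.mem_support]
  rw [hsuppU, hsuppV, Set.ncard_coe_finset, Set.ncard_coe_finset] at heq ⊢
  set Sa := (Finset.univ.filter fun k => ⟪x, U k⟫_ℂ ≠ 0) with hSadef
  set Sb := (Finset.univ.filter fun ℓ => ⟪x, V ℓ⟫_ℂ ≠ 0) with hSbdef
  set μ₁ := muF r (⇑U) (⇑V) with hμ₁def
  set μ₂ := muF r (⇑V) (⇑U) with hμ₂def
  set A : ℝ := (Sa.card : ℝ) with hAdef
  set B : ℝ := (Sb.card : ℝ) with hBdef
  obtain ⟨key1a, key1b⟩ := keyLemma U V hr1 hr2 x hx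
  obtain ⟨key2a, key2b⟩ := keyLemma V U hr1 hr2 x hx
  have hμ₁nn : 0 ≤ μ₁ := muF_nonneg r _ _
  have hμ₂nn : 0 ≤ μ₂ := muF_nonneg r _ _
  have hr20 : r/2 ≠ 0 := by positivity
  have hABpos : (0:ℝ) < A * B := by
    rcases eq_or_lt_of_le (mul_nonneg (by positivity : (0:ℝ) ≤ A) (by positivity : (0:ℝ) ≤ B))
      with h0 | h0
    · exfalso
      rcases mul_eq_zero.mp h0.symm with hA0 | hB0
      · rw [← hAdef] at key2a
        rw [hA0, Real.zero_rpow hr20, zero_mul, zero_mul] at key2a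
        linarith
      · rw [← hBdef] at key1a
        rw [hB0, Real.zero_rpow hr20, zero_mul, zero_mul] at key1a
        linarith
    · exact h0
  have hμprodpos : 0 < μ₁ * μ₂ := by
    rcases eq_or_lt_of_le (mul_nonneg hμ₁nn hμ₂nn) with h0 | h0
    · exfalso
      push_cast at heq
      rw [← h0, div_zero] at heq
      rw [hAdef, hBdef] at hABpos
      linarith
    · exact h0
  have hprod : (A * B) * (μ₁ * μ₂) = 1 := by
    push_cast at heq
    rw [hAdef, hBdef, heq]
    exact one_div_mul_cancel hμprodpos.ne'
  have hApos : (0:ℝ) < A := by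
    by_contra hc
    push_neg at hc
    nlinarith [hABpos, (by positivity : (0:ℝ) ≤ B)]
  have hBpos : (0:ℝ) < B := by
    by_contra hc
    push_neg at hc
    nlinarith [hABpos, (by positivity : (0:ℝ) ≤ A)]
  have hA' : A ^ (r/2:ℝ) * A ^ (1 - r/2:ℝ) = A := by
    rw [← Real.rpow_add hApos, show r/2 + (1 - r/2) = 1 by ring, Real.rpow_one]
  have hB' : B ^ (r/2:ℝ) * B ^ (1 - r/2:ℝ) = B := by
    rw [← Real.rpow_add hBpos, show r/2 + (1 - r/2) = 1 by ring, Real.rpow_one]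
  have hP12 : (B ^ (r/2:ℝ) * A ^ (1 - r/2:ℝ) * μ₁) * (A ^ (r/2:ℝ) * B ^ (1 - r/2:ℝ) * μ₂)
      = 1 := by
    calc (B ^ (r/2:ℝ) * A ^ (1 - r/2:ℝ) * μ₁) * (A ^ (r/2:ℝ) * B ^ (1 - r/2:ℝ) * μ₂)
        = (A ^ (r/2:ℝ) * A ^ (1 - r/2:ℝ)) * (B ^ (r/2:ℝ) * B ^ (1 - r/2:ℝ)) * (μ₁ * μ₂) := by
          ring
    _ = (A * B) * (μ₁ * μ₂) := by rw [hA', hB']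
    _ = 1 := hprod
  have hP1le : B ^ (r/2:ℝ) * A ^ (1 - r/2:ℝ) * μ₁ ≤ 1 := by nlinarith [key1a, key2a, hP12]
  have hP2le : A ^ (r/2:ℝ) * B ^ (1 - r/2:ℝ) * μ₂ ≤ 1 := by nlinarith [key1a, key2a, hP12]
  have hcardB : Sb.card = 1 := key1b hP1le
  have hcardA : Sa.card = 1 := key2b hP2le
  refine ⟨hcardA, hcardB, ?_⟩
  obtain ⟨k₀, hk₀⟩ := Finset.card_eq_one.mp hcardA
  obtain ⟨ℓ₀, hℓ₀⟩ := Finset.card_eq_one.mp hcardB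
  have haoff : ∀ k, k ≠ k₀ → ⟪x, U k⟫_ℂ = 0 := by
    intro k hk
    by_contra hne
    have : k ∈ Sa := by simp [hSadef, hne]
    rw [hk₀, Finset.mem_singleton] at this
    exact hk this
  have hboff : ∀ ℓ, ℓ ≠ ℓ₀ → ⟪x, V ℓ⟫_ℂ = 0 := by
    intro ℓ hℓ
    by_contra hne
    have : ℓ ∈ Sb := by simp [hSbdef, hne]
    rw [hℓ₀, Finset.mem_singleton] at this
    exact hℓ this
  have hxU : x = ⟪U k₀, x⟫_ℂ • U k₀ := by
    calc x = ∑ i, ⟪U i, x⟫_ℂ • U i := (U.sum_repr' x).symm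
    _ = ⟪U k₀, x⟫_ℂ • U k₀ := by
        apply Finset.sum_eq_single k₀
        · intro i _ hi
          rw [inner_eq_zero_symm.mp (haoff i hi), zero_smul]
        · intro hmem
          exact absurd (Finset.mem_univ k₀) hmem
  have hxV : x = ⟪V ℓ₀, x⟫_ℂ • V ℓ₀ := by
    calc x = ∑ i, ⟪V i, x⟫_ℂ • V i := (V.sum_repr' x).symm
    _ = ⟪V ℓ₀, x⟫_ℂ • V ℓ₀ := by
        apply Finset.sum_eq_single ℓ₀
        · intro i _ hi
          rw [inner_eq_zero_symm.mp (hboff i hi), zero_smul]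
        · intro hmem
          exact absurd (Finset.mem_univ ℓ₀) hmem
  set sc := ⟪U k₀, x⟫_ℂ with hscdef
  set uc := ⟪V ℓ₀, x⟫_ℂ with hucdef
  have hu : uc ≠ 0 := by
    intro h0
    rw [h0, zero_smul] at hxV
    exact hx hxV
  have hns : ‖sc‖ = ‖x‖ := by
    conv_rhs => rw [hxU]
    rw [norm_smul, U.orthonormal.1 k₀, mul_one]
  have hnu : ‖uc‖ = ‖x‖ := by
    conv_rhs => rw [hxV]
    rw [norm_smul, V.orthonormal.1 ℓ₀, mul_one]
  have hxne : ‖x‖ ≠ 0 := norm_ne_zero_iff.mpr hx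
  refine ⟨k₀, ℓ₀, uc⁻¹ * sc, ?_, ?_, sc, hxU⟩
  · rw [norm_mul, norm_inv, hns, hnu, inv_mul_cancel₀ hxne]
  · have h9 : uc⁻¹ • x = V ℓ₀ := by
      rw [hxV, smul_smul, inv_mul_cancel₀ hu, one_smul]
    rw [← h9, hxU, smul_smul]
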